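/- Let ω = ω' + iω'' ∈ ℂ with ω' > 0 and ω'' < 0, and let C, D ∈ ℝ with C + iD ≠ 1. Then there exist real numbers a > 0, p > 0 and γ > 0 such that a − ω² − iωγ ≠ 0 and 1 + p/(a − ω² − iωγ) = C + iD. In other words, a passive, lossy, causal Lorentz–Drude material can realize any prescribed complex permittivity value (other than 1) at any complex frequency lying in the open fourth quadrant. -/
import Mathlib


open Complex

/-- For any complex frequency `ω` in the open fourth quadrant
(`Re ω > 0`, `Im ω < 0`) and any target permittivity value `C + iD ≠ 1`, there exist
positive real Lorentz–Drude parameters `a = ω₀²`, `p = ωₚ²`, `γ` (passive, lossy, causal)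
such that the denominator `a − ω² − iωγ` is nonzero and
`ε(ω) = 1 + p/(a − ω² − iωγ) = C + iD`. -/
theorem lorentz_drude_realizes_any_value
    (ω : ℂ) (hre : 0 < ω.re) (him : ω.im < 0)
    (C D : ℝ) (hCD : (C : ℂ) + D * I ≠ 1) :
    ∃ a p γ : ℝ, 0 < a ∧ 0 < p ∧ 0 < γ ∧
      (a : ℂ) - ω ^ 2 - I * ω * γ ≠ 0 ∧
      1 + (p : ℂ) / ((a : ℂ) - ω ^ 2 - I * ω * γ) = (C : ℂ) + D * I := by
  set x := ω.re with hx
  set y := -ω.im with hy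
  have hx0 : 0 < x := hre
  have hy0 : 0 < y := by simp only [hy]; linarith
  have him' : ω.im = -y := by rw [hy]; ring
  have hs0 : 0 < (C-1)^2 + D^2 := by
    rcases eq_or_ne C 1 with h1 | h1
    · rcases eq_or_ne D 0 with h2 | h2
      · exact absurd (by simp [h1, h2]) hCD
      · positivity
    · have h3 : C - 1 ≠ 0 := sub_ne_zero.2 h1
      positivity
  set s := (C-1)^2 + D^2 with hsdef
  set K := |D*y/(x*s) + (C-1)/s| with hK
  set p := min (x*s*y/(|D|+1)) ((x^2+y^2)/(K+1)) with hp
  have hK0 : 0 ≤ K := abs_nonneg _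
  have hp0 : 0 < p := lt_min (by positivity) (by positivity)
  have hp1 : p * (|D|+1) ≤ x*s*y :=
    (le_div_iff₀ (by positivity)).mp (min_le_left _ _)
  have hp2 : p * (K+1) ≤ x^2+y^2 :=
    (le_div_iff₀ (by positivity)).mp (min_le_right _ _)
  set γ := 2*y + p*D/(x*s) with hγ
  have hγ0 : 0 < γ := by
    have h4 : -y < p*D/(x*s) := by
      rw [lt_div_iff₀ (by positivity)]
      nlinarith [neg_abs_le D, abs_nonneg D]
    rw [hγ]; linarith
  set a := x^2+y^2 + p*(D*y/(x*s) + (C-1)/s) with ha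
  have ha0 : 0 < a := by
    have h5 : -(x^2+y^2) < p*(D*y/(x*s) + (C-1)/s) := by
      nlinarith [neg_abs_le (D*y/(x*s) + (C-1)/s), hK0, hp0.le]
    rw [ha]; linarith
  have hsne : (s:ℂ) ≠ 0 := by exact_mod_cast hs0.ne'
  have hscast : (s:ℂ) = ((C:ℂ)-1)^2 + (D:ℂ)^2 := by rw [hsdef]; push_cast; ring
  have h1 : (a:ℂ) - ω^2 - I*ω*γ = ((p*(C-1)/s : ℝ):ℂ) + ((-(p*D/s) : ℝ):ℂ)*I := by
    apply Complex.ext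
    · simp only [Complex.sub_re, Complex.ofReal_re, pow_two, Complex.mul_re,
        Complex.mul_im, Complex.I_re, Complex.I_im, Complex.ofReal_im,
        Complex.add_re, Complex.add_im, him', ← hx]
      rw [ha, hγ]
      field_simp
      ring
    · simp only [Complex.sub_im, Complex.ofReal_im, pow_two, Complex.mul_re,
        Complex.mul_im, Complex.I_re, Complex.I_im, Complex.ofReal_re,
        Complex.add_re, Complex.add_im, him', ← hx]
      rw [hγ]
      field_simp
      ring
  have h1' : (a:ℂ) - ω^2 - I*ω*γ = (p:ℂ) * (((C:ℂ)-1) - (D:ℂ)*I) / (s:ℂ) := by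
    rw [h1]; push_cast; ring
  have expand : (((C:ℂ)-1) - (D:ℂ)*I) * (((C:ℂ)-1) + (D:ℂ)*I) = (s:ℂ) := by
    rw [hscast]; linear_combination (-(D:ℂ)^2) * Complex.I_sq
  have key : ((a:ℂ) - ω^2 - I*ω*γ) * (((C:ℂ)-1) + (D:ℂ)*I) = (p:ℂ) := by
    rw [h1', div_mul_eq_mul_div, mul_assoc, expand, mul_div_assoc,
      div_self hsne, mul_one]
  have hden : (a:ℂ) - ω^2 - I*ω*γ ≠ 0 := by
    intro h
    rw [h, zero_mul] at key
    exact (Complex.ofReal_ne_zero.2 hp0.ne') key.symm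
  refine ⟨a, p, γ, ha0, hp0, hγ0, hden, ?_⟩
  have h2 : (p:ℂ) / ((a:ℂ) - ω^2 - I*ω*γ) = ((C:ℂ)-1) + (D:ℂ)*I := by
    rw [div_eq_iff hden, ← key]; ring
  rw [h2]; ring
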